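/- Fix λⱼ ≥ 0 for j ≠ i, h ∈ ℂᴹ with h ≠ 0, γ > 0, w > 0, and let A(t) = w I + Σ_{j≠i} λⱼ hⱼ hⱼᴴ − (t/γ) h hᴴ for t ≥ 0. Then the set {t ≥ 0 : A(t) ⪰ 0} is a closed bounded interval [0, t̄] with t̄ > 0, and A(t̄) is positive semidefinite and singular. -/

import Mathlib

open Matrix ComplexOrder

namespace Stmt13Aux

variable {M : ℕ}

lemma dp_star_comm (v x : Fin M → ℂ) :
    star x ⬝ᵥ v = (starRingEnd ℂ) (star v ⬝ᵥ x) := by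
  simp [dotProduct, map_sum, mul_comm]

lemma vecMulVec_mulVec' (v x : Fin M → ℂ) :
    vecMulVec v (star v) *ᵥ x = (star v ⬝ᵥ x) • v := by
  ext j
  simp only [Matrix.mulVec, dotProduct, vecMulVec_apply, Pi.smul_apply, smul_eq_mul,
    Pi.star_apply, Finset.sum_mul]
  exact Finset.sum_congr rfl fun k _ => by ring

lemma quad_vecMulVec (v x : Fin M → ℂ) :
    star x ⬝ᵥ (vecMulVec v (star v) *ᵥ x) = (Complex.normSq (star v ⬝ᵥ x) : ℂ) := by
  rw [vecMulVec_mulVec', dotProduct_smul, smul_eq_mul,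
    show star x ⬝ᵥ v = (starRingEnd ℂ) (star v ⬝ᵥ x) from dp_star_comm v x, Complex.mul_conj]

lemma isHermitian_vecMulVec' (v : Fin M → ℂ) : (vecMulVec v (star v)).IsHermitian := by
  ext j k
  simp [conjTranspose_apply, vecMulVec_apply, mul_comm]

lemma posSemidef_vecMulVec' (v : Fin M → ℂ) : (vecMulVec v (star v)).PosSemidef := by
  refine PosSemidef.of_dotProduct_mulVec_nonneg (isHermitian_vecMulVec' v) fun x => ?_
  rw [quad_vecMulVec]
  exact Complex.zero_le_real.mpr (Complex.normSq_nonneg _)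

lemma posSemidef_real_smul {Q : Matrix (Fin M) (Fin M) ℂ} (hQ : Q.PosSemidef)
    {r : ℝ} (hr : 0 ≤ r) : (r • Q).PosSemidef := by
  refine PosSemidef.of_dotProduct_mulVec_nonneg ?_ fun x => ?_
  · show (r • Q)ᴴ = r • Q
    rw [conjTranspose_smul, star_trivial, hQ.1]
  · rw [smul_mulVec, dotProduct_smul, Complex.real_smul]
    exact mul_nonneg (Complex.zero_le_real.mpr hr) (hQ.dotProduct_mulVec_nonneg x)

/-- Cauchy–Schwarz for the complex dot product. -/
lemma cs_dotProduct (a b : Fin M → ℂ) :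
    Complex.normSq (star a ⬝ᵥ b) ≤ (star a ⬝ᵥ a).re * (star b ⬝ᵥ b).re := by
  have h := inner_mul_inner_self_le (𝕜 := ℂ)
    ((WithLp.equiv 2 (Fin M → ℂ)).symm a) ((WithLp.equiv 2 (Fin M → ℂ)).symm b)
  simp only [WithLp.equiv_symm_apply, EuclideanSpace.inner_toLp_toLp,
    dotProduct_comm _ (star _)] at h
  rw [dp_star_comm a b] at h
  have hn : ‖star a ⬝ᵥ b‖ * ‖(starRingEnd ℂ) (star a ⬝ᵥ b)‖
      = Complex.normSq (star a ⬝ᵥ b) := by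
    rw [RCLike.norm_conj, ← Complex.sq_norm, sq]
  rw [hn] at h
  exact h

end Stmt13Aux

open Stmt13Aux

/-- For `A(t) = w I + ∑_{j≠i} λⱼ hⱼ hⱼᴴ − (t/γ) h hᴴ` with `h ≠ 0`, the set
`{t ≥ 0 : A(t) ⪰ 0}` is a closed bounded interval `[0, t̄]` with `t̄ > 0`, and
`A(t̄)` is positive semidefinite and singular. -/
theorem stmt_13 {M K : ℕ} (w γ : ℝ) (hw : 0 < w) (hγ : 0 < γ)
    (lam : Fin K → ℝ) (hlam : ∀ j, 0 ≤ lam j)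
    (g : Fin K → Fin M → ℂ) (h : Fin M → ℂ) (hh : h ≠ 0)
    (A : ℝ → Matrix (Fin M) (Fin M) ℂ)
    (hA : ∀ t : ℝ, A t = w • (1 : Matrix (Fin M) (Fin M) ℂ) +
        ∑ j, lam j • vecMulVec (g j) (star (g j)) - (t / γ) • vecMulVec h (star h)) :
    ∃ tbar : ℝ, 0 < tbar ∧
      {t : ℝ | 0 ≤ t ∧ (A t).PosSemidef} = Set.Icc 0 tbar ∧
      (A tbar).PosSemidef ∧ (A tbar).det = 0 := by
  classical
  set B : Matrix (Fin M) (Fin M) ℂ :=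
    w • (1 : Matrix (Fin M) (Fin M) ℂ) + ∑ j, lam j • vecMulVec (g j) (star (g j)) with hB
  have hA' : ∀ t : ℝ, A t = B - (t / γ) • vecMulVec h (star h) := hA
  -- positive definiteness of B
  have hIdpd : (w • (1 : Matrix (Fin M) (Fin M) ℂ)).PosDef := by
    refine PosDef.of_dotProduct_mulVec_pos ?_ fun x hx => ?_
    · show (w • (1 : Matrix (Fin M) (Fin M) ℂ))ᴴ = _
      rw [conjTranspose_smul, star_trivial, Matrix.isHermitian_one.eq]
    · rw [smul_mulVec, one_mulVec, dotProduct_smul, Complex.real_smul]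
      exact mul_pos (Complex.zero_lt_real.mpr hw) (dotProduct_star_self_pos_iff.mpr hx)
  have hsum : (∑ j, lam j • vecMulVec (g j) (star (g j))).PosSemidef := by
    refine Finset.sum_induction _ _ (fun a b ha hb => ha.add hb) .zero (fun j _ => ?_)
    exact posSemidef_real_smul (posSemidef_vecMulVec' (g j)) (hlam j)
  have hBpd : B.PosDef := hIdpd.add_posSemidef hsum
  have hBherm : Bᴴ = B := hBpd.isHermitian
  -- u, c
  set u : Fin M → ℂ := B⁻¹ *ᵥ h with hu
  have hBu : B *ᵥ u = h := by
    rw [hu, mulVec_mulVec, mul_nonsing_inv _ ((isUnit_iff_isUnit_det _).1 hBpd.isUnit),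
      one_mulVec]
  have hu0 : u ≠ 0 := fun h0 => hh (by rw [← hBu, h0, mulVec_zero])
  set c : ℂ := star h ⬝ᵥ u with hc
  have hcpos : 0 < c := hBpd.inv.dotProduct_mulVec_pos hh
  obtain ⟨hre, him⟩ := Complex.lt_def.mp hcpos
  simp only [Complex.zero_re, Complex.zero_im] at hre him
  set cr : ℝ := c.re with hcr
  have hcreal : c = (cr : ℂ) := Complex.ext rfl (by simp [← him])
  set tbar : ℝ := γ / cr with htbar
  have htbarpos : 0 < tbar := div_pos hγ hre
  -- the quadratic form of B is a nonnegative real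
  have hqB : ∀ x : Fin M → ℂ,
      star x ⬝ᵥ B *ᵥ x = (((star x ⬝ᵥ B *ᵥ x).re : ℝ) : ℂ) ∧ 0 ≤ (star x ⬝ᵥ B *ᵥ x).re := by
    intro x
    obtain ⟨h1, h2⟩ := Complex.le_def.mp (hBpd.posSemidef.dotProduct_mulVec_nonneg x)
    simp only [Complex.zero_re, Complex.zero_im] at h1 h2
    exact ⟨Complex.ext rfl (by simp [← h2]), h1⟩
  -- the key quadratic identity
  have hquad : ∀ (t : ℝ) (x : Fin M → ℂ),
      star x ⬝ᵥ (A t) *ᵥ x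
        = (((star x ⬝ᵥ B *ᵥ x).re - (t / γ) * Complex.normSq (star h ⬝ᵥ x) : ℝ) : ℂ) := by
    intro t x
    rw [hA', sub_mulVec, dotProduct_sub, smul_mulVec, dotProduct_smul,
      quad_vecMulVec, Complex.real_smul]
    conv_lhs => rw [(hqB x).1]
    push_cast
    ring
  -- Cauchy-Schwarz combined
  have hCS : ∀ x : Fin M → ℂ,
      Complex.normSq (star h ⬝ᵥ x) ≤ cr * (star x ⬝ᵥ B *ᵥ x).re := by
    intro x
    have hCpsd := hBpd.posSemidef
    open scoped MatrixOrder in set Cs : Matrix (Fin M) (Fin M) ℂ := CFC.sqrt B with hCs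
    have hCherm : Csᴴ = Cs := open scoped MatrixOrder in (CFC.sqrt_nonneg B).posSemidef.1
    have hCC : Cs * Cs = B := open scoped MatrixOrder in CFC.sqrt_mul_sqrt_self B hCpsd.nonneg
    have keyB : ∀ y z : Fin M → ℂ, star (Cs *ᵥ y) ⬝ᵥ (Cs *ᵥ z) = star y ⬝ᵥ B *ᵥ z := by
      intro y z
      rw [star_mulVec, dotProduct_mulVec, vecMul_vecMul, hCherm, hCC, ← dotProduct_mulVec]
    have key : star h ⬝ᵥ x = star (Cs *ᵥ u) ⬝ᵥ (Cs *ᵥ x) :=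
      calc star h ⬝ᵥ x = star (B *ᵥ u) ⬝ᵥ x := by rw [hBu]
        _ = (star u ᵥ* Bᴴ) ⬝ᵥ x := by rw [star_mulVec]
        _ = star u ⬝ᵥ B *ᵥ x := by rw [hBherm, ← dotProduct_mulVec]
        _ = star (Cs *ᵥ u) ⬝ᵥ (Cs *ᵥ x) := (keyB u x).symm
    have hcs := cs_dotProduct (Cs *ᵥ u) (Cs *ᵥ x)
    rw [← key, keyB u u, keyB x x] at hcs
    have hcu : (star u ⬝ᵥ B *ᵥ u).re = cr := by
      rw [hBu, dp_star_comm h u, ← hc]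
      simp [hcr]
    rwa [hcu] at hcs
  -- hermitian for all t
  have hermA : ∀ t : ℝ, (A t).IsHermitian := by
    intro t
    rw [hA']
    refine IsHermitian.sub hBpd.isHermitian ?_
    show ((t / γ) • vecMulVec h (star h))ᴴ = _
    rw [conjTranspose_smul, star_trivial, (isHermitian_vecMulVec' h).eq]
  -- positive semidefinite for t ≤ tbar
  have hpsd : ∀ t : ℝ, t ≤ tbar → (A t).PosSemidef := by
    intro t ht
    refine PosSemidef.of_dotProduct_mulVec_nonneg (hermA t) fun x => ?_
    rw [hquad t x]
    refine Complex.zero_le_real.mpr ?_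
    have hns : 0 ≤ Complex.normSq (star h ⬝ᵥ x) := Complex.normSq_nonneg _
    have hqre := (hqB x).2
    have e1 : t / γ ≤ 1 / cr := by
      rw [div_le_div_iff₀ hγ hre]
      have := (le_div_iff₀ hre).mp ht
      linarith
    have e2 : (t / γ) * Complex.normSq (star h ⬝ᵥ x)
        ≤ (1 / cr) * Complex.normSq (star h ⬝ᵥ x) :=
      mul_le_mul_of_nonneg_right e1 hns
    have e3 : (1 / cr) * Complex.normSq (star h ⬝ᵥ x)
        ≤ (1 / cr) * (cr * (star x ⬝ᵥ B *ᵥ x).re) :=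
      mul_le_mul_of_nonneg_left (hCS x) (by positivity)
    have e4 : (1 / cr) * (cr * (star x ⬝ᵥ B *ᵥ x).re) = (star x ⬝ᵥ B *ᵥ x).re := by
      field_simp
    linarith
  -- the set is [0, tbar]
  have hset : {t : ℝ | 0 ≤ t ∧ (A t).PosSemidef} = Set.Icc 0 tbar := by
    ext t
    simp only [Set.mem_setOf_eq, Set.mem_Icc]
    constructor
    · rintro ⟨ht0, hts⟩
      refine ⟨ht0, ?_⟩
      have h2 := hts.dotProduct_mulVec_nonneg u
      rw [hquad t u] at h2
      have h3 : 0 ≤ (star u ⬝ᵥ B *ᵥ u).re - (t / γ) * Complex.normSq (star h ⬝ᵥ u) :=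
        Complex.zero_le_real.mp h2
      have hcu : (star u ⬝ᵥ B *ᵥ u).re = cr := by
        rw [hBu, dp_star_comm h u, ← hc]
        simp [hcr]
      have hnsc : Complex.normSq (star h ⬝ᵥ u) = cr * cr := by
        rw [← hc, hcreal, Complex.normSq_ofReal]
      rw [hcu, hnsc] at h3
      rw [htbar, le_div_iff₀ hre]
      have h4 : (t / γ) * (cr * cr) ≤ cr := by linarith
      have h5 : t * (cr * cr) ≤ γ * cr := by
        calc t * (cr * cr) = γ * ((t / γ) * (cr * cr)) := by field_simp
          _ ≤ γ * cr := mul_le_mul_of_nonneg_left h4 hγ.le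
      nlinarith [hre, h5]
    · rintro ⟨ht0, ht1⟩
      exact ⟨ht0, hpsd t ht1⟩
  refine ⟨tbar, htbarpos, hset, hpsd tbar le_rfl, ?_⟩
  -- singularity: A tbar *ᵥ u = 0
  have hAu : A tbar *ᵥ u = 0 := by
    rw [hA', sub_mulVec, smul_mulVec, vecMulVec_mulVec', ← hc, hcreal, hBu]
    have hsc : ((tbar / γ : ℝ) : ℂ) * (cr : ℂ) = 1 := by
      have h6 : tbar / γ * cr = 1 := by
        rw [htbar]
        field_simp
      rw [← Complex.ofReal_mul, h6, Complex.ofReal_one]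
    funext i
    simp only [Pi.sub_apply, Pi.smul_apply, Pi.zero_apply, smul_eq_mul, Complex.real_smul]
    rw [← mul_assoc, hsc, one_mul, sub_self]
  exact (Matrix.exists_mulVec_eq_zero_iff.mp ⟨u, hu0, hAu⟩)
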